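/- Suppose ‖f‖_p ≤ K · ψ(p) for all p in a set S ⊂ [1,∞), where K > 0 and ψ : S → (0,∞). Define ν(p) = p · ln ψ(p) and its Young–Fenchel transform ν*(y) = sup_{p ∈ S} (p·y − ν(p)). Then for every t > 0, T[f](t) ≤ exp(−ν*(ln(t/K))). -/

import Mathlib

open MeasureTheory Set

/-- If `‖f‖_p ≤ K ψ(p)` for `p ∈ S`, then with `ν(p) = p ln ψ(p)` and the Young–Fenchel
transform `ν*(y) = sup_{p∈S} (p y − ν(p))`, one has `T[f](t) ≤ exp(−ν*(ln(t/K)))`,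
expressed equivalently as an infimum over `p ∈ S` of `exp(−(p·ln(t/K) − ν(p)))`. -/
theorem tail_from_grand_lebesgue (d : ℕ) (f : EuclideanSpace ℝ (Fin d) → ℝ)
    (hf : Measurable f) (S : Set ℝ) (hS : S ⊆ Ici 1) (ψ : ℝ → ℝ)
    (hψ : ∀ p ∈ S, 0 < ψ p) (K : ℝ) (hK : 0 < K)
    (hbound : ∀ p ∈ S,
      eLpNorm f (ENNReal.ofReal p) (volume : Measure (EuclideanSpace ℝ (Fin d)))
        ≤ ENNReal.ofReal (K * ψ p))
    (t : ℝ) (ht : 0 < t) :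
    volume {x : EuclideanSpace ℝ (Fin d) | t ≤ |f x|}
      ≤ ⨅ p ∈ S, ENNReal.ofReal
          (Real.exp (-(p * Real.log (t / K) - p * Real.log (ψ p)))) := by
  refine le_iInf₂ fun p hp => ?_
  have hp1 : (1 : ℝ) ≤ p := hS hp
  have hp0 : (0 : ℝ) < p := lt_of_lt_of_le one_pos hp1
  have hψp : 0 < ψ p := hψ p hp
  have hKψ : 0 < K * ψ p := mul_pos hK hψp
  have hpne : (ENNReal.ofReal p) ≠ 0 := by
    simp [ENNReal.ofReal_eq_zero, not_le, hp0]
  have hptop : (ENNReal.ofReal p) ≠ ⊤ := ENNReal.ofReal_ne_top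
  have htoReal : (ENNReal.ofReal p).toReal = p := ENNReal.toReal_ofReal hp0.le
  have hεne : (ENNReal.ofReal t) ≠ 0 := by
    simp [ENNReal.ofReal_eq_zero, not_le, ht]
  have hset : {x : EuclideanSpace ℝ (Fin d) | t ≤ |f x|}
      = {x : EuclideanSpace ℝ (Fin d) | ENNReal.ofReal t ≤ (‖f x‖₊ : ENNReal)} := by
    ext x
    simp only [mem_setOf_eq, ← enorm_eq_nnnorm, ← ofReal_norm,
      Real.norm_eq_abs]
    exact (ENNReal.ofReal_le_ofReal_iff (abs_nonneg _)).symm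
  have hmarkov := meas_ge_le_mul_pow_eLpNorm_enorm
    (volume : Measure (EuclideanSpace ℝ (Fin d))) hpne hptop
    hf.aestronglyMeasurable hεne (fun h => absurd h ENNReal.ofReal_ne_top)
  rw [hset]
  refine hmarkov.trans ?_
  have hbd : eLpNorm f (ENNReal.ofReal p) volume ^ (ENNReal.ofReal p).toReal
      ≤ ENNReal.ofReal (K * ψ p) ^ (ENNReal.ofReal p).toReal :=
    ENNReal.rpow_le_rpow (hbound p hp) ENNReal.toReal_nonneg
  calc (ENNReal.ofReal t)⁻¹ ^ (ENNReal.ofReal p).toReal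
        * eLpNorm f (ENNReal.ofReal p) volume ^ (ENNReal.ofReal p).toReal
      ≤ (ENNReal.ofReal t)⁻¹ ^ (ENNReal.ofReal p).toReal
        * ENNReal.ofReal (K * ψ p) ^ (ENNReal.ofReal p).toReal :=
          mul_le_mul_right hbd _
    _ = ENNReal.ofReal (Real.exp (-(p * Real.log (t / K) - p * Real.log (ψ p)))) := by
        rw [htoReal, ← ENNReal.ofReal_inv_of_pos ht,
          ENNReal.ofReal_rpow_of_pos (by positivity),
          ENNReal.ofReal_rpow_of_pos hKψ,
          ← ENNReal.ofReal_mul (by positivity)]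
        congr 1
        rw [← Real.mul_rpow (by positivity) hKψ.le,
          Real.rpow_def_of_pos (by positivity),
          Real.log_mul (by positivity) hKψ.ne',
          Real.log_inv, Real.log_mul hK.ne' hψp.ne', Real.log_div ht.ne' hK.ne']
        ring_nf
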